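/- Fix i ∈ {1, …, n} and μ ∈ ℝᵐ, write d ∈ ℝᵐ for the vector with entries d_j = c_{ij} + μ_j, and let d_{(1)} ≤ d_{(2)} ≤ … ≤ d_{(m)} be its entries sorted in nondecreasing order. Define f_i(λ) = Σ_{j=1}^m [−d_j − λ]_+. Let l be the largest index j ∈ {1, …, m} such that f_i(−d_{(j)}) ≤ γ a_i (such l exists since f_i(−d_{(1)}) = 0). Then λ_i = −(γ a_i + Σ_{j=1}^l d_{(j)}) / l satisfies f_i(λ_i) = γ a_i, i.e., this explicit formula gives an exact solution of the first-order optimality condition Σ_{j=1}^m [−c_{ij} − λ_i − μ_j]_+ = γ a_i. -/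

import Mathlib

open Finset MeasureTheory

noncomputable section

namespace OT

def inn {n m : ℕ} (C X : Matrix (Fin n) (Fin m) ℝ) : ℝ := ∑ i, ∑ j, C i j * X i j

def nsq {n m : ℕ} (X : Matrix (Fin n) (Fin m) ℝ) : ℝ := ∑ i, ∑ j, (X i j) ^ 2

def l1m {n m : ℕ} (X : Matrix (Fin n) (Fin m) ℝ) : ℝ := ∑ i, ∑ j, |X i j|

def rowSum {n m : ℕ} (X : Matrix (Fin n) (Fin m) ℝ) (i : Fin n) : ℝ := ∑ j, X i j

def colSum {n m : ℕ} (X : Matrix (Fin n) (Fin m) ℝ) (j : Fin m) : ℝ := ∑ i, X i j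

def fobj {n m : ℕ} (C : Matrix (Fin n) (Fin m) ℝ) (γ : ℝ) (X : Matrix (Fin n) (Fin m) ℝ) : ℝ :=
  inn C X + γ / 2 * nsq X

def Lag {n m : ℕ} (C : Matrix (Fin n) (Fin m) ℝ) (γ : ℝ) (a : Fin n → ℝ) (b : Fin m → ℝ)
    (X : Matrix (Fin n) (Fin m) ℝ) (lam : Fin n → ℝ) (mu : Fin m → ℝ) : ℝ :=
  inn C X + γ / 2 * nsq X + (∑ i, lam i * (rowSum X i - a i)) + (∑ j, mu j * (colSum X j - b j))

def plan {n m : ℕ} (C : Matrix (Fin n) (Fin m) ℝ) (γ : ℝ) (lam : Fin n → ℝ) (mu : Fin m → ℝ) :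
    Matrix (Fin n) (Fin m) ℝ :=
  fun i j => max 0 (-(C i j) - lam i - mu j) / γ

def phi {n m : ℕ} (C : Matrix (Fin n) (Fin m) ℝ) (γ : ℝ) (a : Fin n → ℝ) (b : Fin m → ℝ)
    (lam : Fin n → ℝ) (mu : Fin m → ℝ) : ℝ :=
  -(1 / (2 * γ)) * (∑ i, ∑ j, (max 0 (-(C i j) - lam i - mu j)) ^ 2)
    - (∑ i, lam i * a i) - (∑ j, mu j * b j)

def memU {n m : ℕ} (a : Fin n → ℝ) (b : Fin m → ℝ) (X : Matrix (Fin n) (Fin m) ℝ) : Prop :=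
  (∀ i j, 0 ≤ X i j) ∧ (∀ i, rowSum X i = a i) ∧ (∀ j, colSum X j = b j)

def Cinf {n m : ℕ} (C : Matrix (Fin n) (Fin m) ℝ) : ℝ := ⨆ p : Fin n × Fin m, C p.1 p.2

def Rbound {n m : ℕ} (C : Matrix (Fin n) (Fin m) ℝ) (γ : ℝ) (a : Fin n → ℝ) (b : Fin m → ℝ) : ℝ :=
  Cinf C + γ / (min (n : ℝ) (m : ℝ)) * (1 - max (⨆ i, a i) (⨆ j, b j))

end OT

open OT in
theorem stmt4 {n m : ℕ} (hn : 0 < n) (hm : 0 < m)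
    (a : Fin n → ℝ) (ha : ∀ i, 0 ≤ a i) (ha1 : ∑ i, a i = 1)
    (C : Matrix (Fin n) (Fin m) ℝ) (hC : ∀ i j, 0 ≤ C i j)
    (γ : ℝ) (hγ : 0 < γ) (i : Fin n) (mu : Fin m → ℝ)
    (σ : Equiv.Perm (Fin m))
    (hsort : Monotone (fun j : Fin m => C i (σ j) + mu (σ j)))
    (l : Fin m)
    (hl : (∑ j, max 0 ((C i (σ l) + mu (σ l)) - (C i j + mu j))) ≤ γ * a i)
    (hlmax : ∀ j : Fin m,
      (∑ j', max 0 ((C i (σ j) + mu (σ j)) - (C i j' + mu j'))) ≤ γ * a i → j ≤ l) :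
    (∑ j, max 0 (-(C i j)
        - (-(γ * a i + ∑ j' ∈ Finset.filter (fun j' => j' ≤ l) Finset.univ,
              (C i (σ j') + mu (σ j'))) / ((l : ℕ) + 1))
        - mu j)) = γ * a i := by

  classical
  have hk : (0:ℝ) < ((l : ℕ) : ℝ) + 1 := by positivity
  set d : Fin m → ℝ := fun j => C i j + mu j with hd
  have hmono : Monotone fun j => d (σ j) := hsort
  set T : Finset (Fin m) := Finset.filter (fun j' => j' ≤ l) Finset.univ with hT
  have hTmem : ∀ j : Fin m, j ∈ T ↔ j ≤ l := by intro j; simp [hT]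
  have hTcard : (T.card : ℝ) = ((l : ℕ) : ℝ) + 1 := by
    have : T = Finset.Iic l := by ext j; simp [hT]
    rw [this]
    norm_cast
    simp [Fin.card_Iic]
  set S : ℝ := ∑ j' ∈ T, d (σ j') with hS
  set lam : ℝ := -(γ * a i + S) / (((l : ℕ) : ℝ) + 1) with hlam
  -- key lemma
  have key : ∀ x : Fin m, l ≤ x → (x : ℕ) ≤ (l : ℕ) + 1 →
      (∑ j, max 0 (d (σ x) - d j)) = ∑ j' ∈ T, (d (σ x) - d (σ j')) := by
    intro x hlx hxl
    have h1 : (∑ j, max 0 (d (σ x) - d j)) = ∑ j, max 0 (d (σ x) - d (σ j)) :=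
      (Equiv.sum_comp σ (fun j => max 0 (d (σ x) - d j))).symm
    rw [h1, ← Finset.sum_filter_add_sum_filter_not Finset.univ (fun j' => j' ≤ l), ← hT]
    have h2 : ∑ j' ∈ T, max 0 (d (σ x) - d (σ j')) = ∑ j' ∈ T, (d (σ x) - d (σ j')) := by
      refine Finset.sum_congr rfl fun j' hj' => ?_
      have hle : j' ≤ l := (hTmem j').mp hj'
      have h' : d (σ j') ≤ d (σ x) := hmono (le_trans hle hlx)
      simpa using max_eq_right (show d (σ x) - d (σ j') ≥ 0 by linarith)
    have h3 : ∑ j' ∈ Finset.filter (fun j' => ¬ j' ≤ l) Finset.univ,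
        max 0 (d (σ x) - d (σ j')) = 0 := by
      refine Finset.sum_eq_zero fun j' hj' => ?_
      have hj'l : ¬ j' ≤ l := by simpa using hj'
      have : l < j' := lt_of_not_ge hj'l
      have hxj' : x ≤ j' := by
        have : (l : ℕ) + 1 ≤ (j' : ℕ) := this
        exact Fin.le_def.mpr (le_trans hxl this)
      have h' : d (σ x) ≤ d (σ j') := hmono hxj'
      simpa using max_eq_left (show d (σ x) - d (σ j') ≤ 0 by linarith)
    rw [h2, h3, add_zero]
  have hkey_l : (∑ j' ∈ T, (d (σ l) - d (σ j'))) ≤ γ * a i := by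
    rw [← key l le_rfl (by omega)]; exact hl
  have hsum_l : (∑ j' ∈ T, (d (σ l) - d (σ j'))) = (((l:ℕ):ℝ) + 1) * d (σ l) - S := by
    rw [Finset.sum_sub_distrib, Finset.sum_const, nsmul_eq_mul, hTcard, hS]
  have hdl : d (σ l) ≤ (γ * a i + S) / (((l:ℕ):ℝ) + 1) := by
    rw [hsum_l] at hkey_l
    rw [le_div_iff₀ hk]
    linarith
  -- main computation
  have hmain : (∑ j, max 0 (-(C i j) - lam - mu j)) = ∑ j, max 0 (-(d (σ j)) - lam) := by
    have : (∑ j, max 0 (-(C i j) - lam - mu j)) = ∑ j, max 0 (-(d j) - lam) := by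
      refine Finset.sum_congr rfl fun j _ => ?_
      simp only [hd]; ring_nf
    rw [this]
    exact (Equiv.sum_comp σ (fun j => max 0 (-(d j) - lam))).symm
  have hsplit : (∑ j, max 0 (-(d (σ j)) - lam)) = ∑ j' ∈ T, (-(d (σ j')) - lam) := by
    rw [← Finset.sum_filter_add_sum_filter_not Finset.univ (fun j' => j' ≤ l), ← hT]
    have h2 : ∑ j' ∈ T, max 0 (-(d (σ j')) - lam) = ∑ j' ∈ T, (-(d (σ j')) - lam) := by
      refine Finset.sum_congr rfl fun j' hj' => ?_
      have hj'l : j' ≤ l := (hTmem j').mp hj'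
      have h1 : d (σ j') ≤ d (σ l) := hmono hj'l
      have h2 : -lam = (γ * a i + S) / (((l:ℕ):ℝ) + 1) := by rw [hlam]; ring
      have h3 : d (σ j') ≤ -lam := by rw [h2]; exact le_trans h1 hdl
      simpa using max_eq_right (show -d (σ j') - lam ≥ 0 by linarith)
    have h3 : ∑ j' ∈ Finset.filter (fun j' => ¬ j' ≤ l) Finset.univ,
        max 0 (-(d (σ j')) - lam) = 0 := by
      refine Finset.sum_eq_zero fun j' hj' => ?_
      have hj'l : l < j' := lt_of_not_ge (by simpa using hj')
      have hlt : (l : ℕ) + 1 ≤ (j' : ℕ) := hj'l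
      have hj1m : (l : ℕ) + 1 < m := lt_of_le_of_lt hlt j'.isLt
      set j₁ : Fin m := ⟨(l : ℕ) + 1, hj1m⟩ with hj₁
      have hj₁l : ¬ j₁ ≤ l := by
        simp [hj₁, Fin.le_def]
      have hgt : γ * a i < ∑ j'', max 0 (d (σ j₁) - d j'') := by
        by_contra hcon
        exact hj₁l (hlmax j₁ (le_of_not_gt hcon))
      have hkeyj : (∑ j'', max 0 (d (σ j₁) - d j'')) = ∑ j'' ∈ T, (d (σ j₁) - d (σ j'')) :=
        key j₁ (le_of_lt (Fin.lt_def.mpr (by simp [hj₁]))) (by simp [hj₁])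
      have hsumj : (∑ j'' ∈ T, (d (σ j₁) - d (σ j''))) = (((l:ℕ):ℝ) + 1) * d (σ j₁) - S := by
        rw [Finset.sum_sub_distrib, Finset.sum_const, nsmul_eq_mul, hTcard, hS]
      rw [hkeyj, hsumj] at hgt
      have hdj1 : (γ * a i + S) / (((l:ℕ):ℝ) + 1) < d (σ j₁) := by
        rw [div_lt_iff₀ hk]; linarith
      have hdd : d (σ j₁) ≤ d (σ j') := hmono (Fin.le_def.mpr (by simpa [hj₁] using hlt))
      have h2 : -lam = (γ * a i + S) / (((l:ℕ):ℝ) + 1) := by rw [hlam]; ring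
      have h3 : -lam ≤ d (σ j') := by rw [h2]; exact le_trans (le_of_lt hdj1) hdd
      simpa using max_eq_left (show -d (σ j') - lam ≤ 0 by linarith)
    rw [h2, h3, add_zero]
  have hfinal : (∑ j' ∈ T, (-(d (σ j')) - lam)) = γ * a i := by
    rw [Finset.sum_sub_distrib, Finset.sum_neg_distrib, Finset.sum_const, nsmul_eq_mul,
      hTcard, ← hS, hlam]
    field_simp
    ring
  calc (∑ j, max 0 (-(C i j) - lam - mu j))
      = ∑ j, max 0 (-(d (σ j)) - lam) := hmain
    _ = ∑ j' ∈ T, (-(d (σ j')) - lam) := hsplit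
    _ = γ * a i := hfinal
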